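/- Let X be a binomial random variable with parameters n ≥ 1 and p ∈ (0,1). Then E[1/((X+1)(X+2)) | X ≥ 1] ≤ 1/(p^2·(n+1)·(n+2)). -/

import Mathlib

/-- For `X ~ Bin(n,p)` with `n ≥ 1` and `p ∈ (0,1)`,
`E[1/((X+1)(X+2)) | X ≥ 1] ≤ 1/(p²·(n+1)·(n+2))`, where
`E[f(X) | X ≥ 1] = E[f(X)·1_{X≥1}] / P(X ≥ 1)` and `P(X ≥ 1) = 1 − (1−p)^n`. -/
theorem binomial_condexp_inv_succ_mul_le (n : ℕ) (hn : 1 ≤ n) (p : ℝ)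
    (hp : p ∈ Set.Ioo (0 : ℝ) 1) :
    (∑ i ∈ Finset.Icc 1 n,
        (n.choose i : ℝ) * p ^ i * (1 - p) ^ (n - i) *
          (1 / (((i : ℝ) + 1) * ((i : ℝ) + 2))))
      / (1 - (1 - p) ^ n)
      ≤ 1 / (p ^ 2 * ((n : ℝ) + 1) * ((n : ℝ) + 2)) := by
  obtain ⟨hp0, hp1⟩ := hp
  have hq0 : (0:ℝ) < 1 - p := by linarith
  have hqn1 : (1 - p) ^ n < 1 := pow_lt_one₀ hq0.le (by linarith) (by omega)
  have hqnn : (0:ℝ) < (1 - p) ^ n := pow_pos hq0 n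
  have hden : (0:ℝ) < 1 - (1 - p) ^ n := by linarith
  have hc : (0:ℝ) < p ^ 2 * ((n:ℝ) + 1) * ((n:ℝ) + 2) := by positivity
  rw [div_le_div_iff₀ hden hc, one_mul, Finset.sum_mul]
  have hstep : ∀ i ∈ Finset.Icc 1 n,
      (n.choose i : ℝ) * p ^ i * (1 - p) ^ (n - i) *
          (1 / (((i : ℝ) + 1) * ((i : ℝ) + 2))) * (p ^ 2 * ((n:ℝ) + 1) * ((n:ℝ) + 2))
      = p ^ (i + 2) * (1 - p) ^ (n + 2 - (i + 2)) * ((n + 2).choose (i + 2) : ℝ) := by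
    intro i hi
    simp only [Finset.mem_Icc] at hi
    have h1 : ((n:ℝ) + 1) * (n.choose i : ℝ) = ((n + 1).choose (i + 1) : ℝ) * ((i:ℝ) + 1) := by
      exact_mod_cast congrArg (Nat.cast (R := ℝ)) (Nat.add_one_mul_choose_eq n i)
    have h2 : ((n:ℝ) + 2) * ((n + 1).choose (i + 1) : ℝ)
        = ((n + 2).choose (i + 2) : ℝ) * ((i:ℝ) + 2) := by
      exact_mod_cast congrArg (Nat.cast (R := ℝ)) (Nat.add_one_mul_choose_eq (n + 1) (i + 1))
    have hid : ((i:ℝ) + 1) * ((i:ℝ) + 2) * ((n + 2).choose (i + 2) : ℝ)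
        = ((n:ℝ) + 1) * ((n:ℝ) + 2) * (n.choose i : ℝ) := by
      nlinarith [h1, h2]
    have hsub : n + 2 - (i + 2) = n - i := by omega
    rw [hsub, pow_add]
    have hi1 : ((i:ℝ) + 1) ≠ 0 := by positivity
    have hi2 : ((i:ℝ) + 2) ≠ 0 := by positivity
    field_simp
    linear_combination (-1) * hid
  rw [Finset.sum_congr rfl hstep]
  -- reindex : sum over Icc 1 n of g (i+2) = sum over Icc 3 (n+2) of g
  set g : ℕ → ℝ := fun k => p ^ k * (1 - p) ^ (n + 2 - k) * ((n + 2).choose k : ℝ) with hg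
  have hre : ∑ i ∈ Finset.Icc 1 n, g (i + 2) = ∑ k ∈ Finset.Icc 3 (n + 2), g k := by
    rw [← Finset.map_add_right_Icc 1 n 2, Finset.sum_map]
    rfl
  have hbin : ∑ k ∈ Finset.range (n + 3), g k = 1 := by
    have := add_pow p (1 - p) (n + 2)
    simp only [add_sub_cancel, one_pow] at this
    rw [hg]
    linarith [this]
  rw [hre]
  have hsplit : (∑ k ∈ Finset.Ico 0 3, g k) + ∑ k ∈ Finset.Ico 3 (n + 3), g k
      = ∑ k ∈ Finset.Ico 0 (n + 3), g k :=
    Finset.sum_Ico_consecutive g (by omega) (by omega)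
  have hIcc : Finset.Icc 3 (n + 2) = Finset.Ico 3 (n + 3) := (Finset.Ico_add_one_right_eq_Icc 3 (n + 2)).symm
  have hrange : ∑ k ∈ Finset.Ico 0 (n + 3), g k = 1 := by
    rwa [← Finset.range_eq_Ico]
  have hsm : (∑ k ∈ Finset.Ico 0 3, g k) = g 0 + g 1 + g 2 := by
    rw [← Finset.range_eq_Ico, Finset.sum_range_succ, Finset.sum_range_succ,
      Finset.sum_range_one]
  have hch : (3:ℝ) ≤ ((n + 2).choose 2 : ℝ) := by
    have : Nat.choose 3 2 ≤ (n + 2).choose 2 := Nat.choose_le_choose 2 (by omega)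
    simpa using (Nat.cast_le (α := ℝ)).2 this
  have hg0 : g 0 = (1 - p) ^ (n + 2) := by simp [hg]
  have hg1 : g 1 = p * (1 - p) ^ (n + 1) * ((n:ℝ) + 2) := by
    have : n + 2 - 1 = n + 1 := by omega
    rw [hg]
    simp only [this, pow_one, Nat.choose_one_right]
    push_cast
    ring
  have hg2 : g 2 = p ^ 2 * (1 - p) ^ n * ((n + 2).choose 2 : ℝ) := by
    simp [hg]
  have hlow : (1 - p) ^ n ≤ g 0 + g 1 + g 2 := by
    rw [hg0, hg1, hg2, pow_add, pow_add]
    have hn2 : (2:ℝ) ≤ (n:ℝ) + 2 := by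
      have := Nat.cast_nonneg (α := ℝ) n
      linarith
    nlinarith [hqnn, mul_pos hp0 hq0, sq_nonneg p, hch, hqnn.le,
      mul_nonneg (mul_nonneg (sq_nonneg p) hqnn.le) (by linarith : (0:ℝ) ≤ ((n + 2).choose 2 : ℝ) - 3),
      mul_nonneg (mul_nonneg hp0.le hqnn.le) (by positivity : (0:ℝ) ≤ (n:ℝ))]
  rw [hIcc]
  linarith [hsplit, hrange, hsm, hlow]
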